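/- The sets J_π, as π ranges over all set partitions of [n], form a partition of U_n(K): every upper unitriangular matrix A belongs to exactly one J_π. -/

import Mathlib

open scoped BigOperators
open Finset Classical

/-- Two indices lie in the same block of the set partition `P` of `[n]`. -/
def SameBlock {n : ℕ} (P : Finpartition (Finset.univ : Finset (Fin n))) (i j : Fin n) : Prop :=
  ∃ B ∈ P.parts, i ∈ B ∧ j ∈ B

/-- `(i,j)` is an arc of `P`: same block, `i < j`, no element of that block strictly between. -/
def IsArc {n : ℕ} (P : Finpartition (Finset.univ : Finset (Fin n))) (i j : Fin n) : Prop :=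
  i < j ∧ SameBlock P i j ∧ ∀ k : Fin n, i < k → k < j → ¬ SameBlock P i k

/-- The set of arcs `D(π)`. -/
noncomputable def arcs {n : ℕ} (P : Finpartition (Finset.univ : Finset (Fin n))) :
    Finset (Fin n × Fin n) :=
  Finset.univ.filter (fun p => IsArc P p.1 p.2)

/-- `d(π)`, the number of arcs. -/
noncomputable def dP {n : ℕ} (P : Finpartition (Finset.univ : Finset (Fin n))) : ℕ :=
  (arcs P).card

/-- `dim(π) = Σ_{(i,j) ∈ D(π)} (j - i)`. -/
noncomputable def dimP {n : ℕ} (P : Finpartition (Finset.univ : Finset (Fin n))) : ℕ :=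
  ∑ p ∈ arcs P, (p.2.val - p.1.val)

/-- `crs(π)`, the number of crossings, i.e. pairs of arcs `(i,j), (k,l)` with `i<k<j<l`. -/
noncomputable def crsP {n : ℕ} (P : Finpartition (Finset.univ : Finset (Fin n))) : ℕ :=
  (((arcs P) ×ˢ (arcs P)).filter
    (fun q => q.1.1 < q.2.1 ∧ q.2.1 < q.1.2 ∧ q.1.2 < q.2.2)).card

/-- `(i,j)` is a `π`-singular pair. -/
def SingularPair {n : ℕ} (P : Finpartition (Finset.univ : Finset (Fin n))) (i j : Fin n) : Prop :=
  i < j ∧ ((∃ k : Fin n, k < i ∧ IsArc P k j) ∨ (∃ l : Fin n, j < l ∧ IsArc P i l))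

/-- `(i,j)` is a `π`-regular pair. -/
def RegularPair {n : ℕ} (P : Finpartition (Finset.univ : Finset (Fin n))) (i j : Fin n) : Prop :=
  i < j ∧ ¬ ((∃ k : Fin n, k < i ∧ IsArc P k j) ∨ (∃ l : Fin n, j < l ∧ IsArc P i l))

/-- The set `Sing(π)` of singular pairs. -/
noncomputable def singP {n : ℕ} (P : Finpartition (Finset.univ : Finset (Fin n))) :
    Finset (Fin n × Fin n) :=
  Finset.univ.filter (fun p => SingularPair P p.1 p.2)

/-- The set `reg(π)` of regular pairs. -/
noncomputable def regP {n : ℕ} (P : Finpartition (Finset.univ : Finset (Fin n))) :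
    Finset (Fin n × Fin n) :=
  Finset.univ.filter (fun p => RegularPair P p.1 p.2)

/-- The set `J_π` of upper unitriangular matrices with nonzero entries at arcs,
zero entries at regular non-arc pairs, arbitrary entries at singular pairs. -/
noncomputable def Jset {n : ℕ} (K : Type*) [Field K] [Fintype K] [DecidableEq K]
    (P : Finpartition (Finset.univ : Finset (Fin n))) :
    Finset (Matrix (Fin n) (Fin n) K) :=
  Finset.univ.filter (fun A =>
    (∀ i : Fin n, A i i = 1) ∧
    (∀ i j : Fin n, j < i → A i j = 0) ∧
    (∀ p ∈ arcs P, A p.1 p.2 ≠ 0) ∧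
    (∀ i j : Fin n, RegularPair P i j → ¬ IsArc P i j → A i j = 0))

section StmtAux
set_option linter.unusedSectionVars false
variable {n : ℕ} {K : Type*} [Field K] [Fintype K] [DecidableEq K]

/-- Recursively defined arc relation extracted from a unitriangular matrix. -/
def ArcA (A : Matrix (Fin n) (Fin n) K) (i j : Fin n) : Prop :=
  A i j ≠ 0 ∧ i < j ∧ (∀ k, k < i → ¬ ArcA A k j) ∧ (∀ l, j < l → ¬ ArcA A i l)
termination_by i.val + (n - j.val)
decreasing_by
  · omega
  · have : j.val < n := j.isLt
    omega

theorem arcA_iff (A : Matrix (Fin n) (Fin n) K) (i j : Fin n) :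
    ArcA A i j ↔ A i j ≠ 0 ∧ i < j ∧ (∀ k, k < i → ¬ ArcA A k j) ∧ (∀ l, j < l → ¬ ArcA A i l) := by
  conv_lhs => rw [ArcA]

variable {A : Matrix (Fin n) (Fin n) K}

theorem arcA_lt {i j : Fin n} (h : ArcA A i j) : i < j := ((arcA_iff A i j).1 h).2.1

theorem arcA_succ_unique {i j l : Fin n} (h : ArcA A i j) (h' : ArcA A i l) : j = l := by
  rcases lt_trichotomy j l with hc | hc | hc
  · exact absurd h' (((arcA_iff A i j).1 h).2.2.2 l hc)
  · exact hc
  · exact absurd h (((arcA_iff A i l).1 h').2.2.2 j hc)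

theorem arcA_pred_unique {i j k : Fin n} (h : ArcA A i j) (h' : ArcA A k j) : i = k := by
  rcases lt_trichotomy i k with hc | hc | hc
  · exact absurd h (((arcA_iff A k j).1 h').2.2.1 i hc)
  · exact hc
  · exact absurd h' (((arcA_iff A i j).1 h).2.2.1 k hc)

theorem reach_det {α : Type*} {r : α → α → Prop} (hf : ∀ ⦃a b c⦄, r a b → r a c → b = c)
    {j i : α} (hji : Relation.ReflTransGen r j i) :
    ∀ {k}, Relation.ReflTransGen r j k →
      Relation.ReflTransGen r i k ∨ Relation.ReflTransGen r k i := by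
  induction hji using Relation.ReflTransGen.head_induction_on with
  | refl => exact fun hjk => Or.inl hjk
  | head h t ih =>
    intro k hjk
    rcases Relation.ReflTransGen.cases_head hjk with rfl | ⟨c', hc', ht'⟩
    · exact Or.inr (Relation.ReflTransGen.head h t)
    · cases hf h hc'
      exact ih ht'

theorem reach_codet {α : Type*} {r : α → α → Prop} (hf : ∀ ⦃a b c⦄, r a c → r b c → a = b)
    {i k j : α} (hij : Relation.ReflTransGen r i j) (hkj : Relation.ReflTransGen r k j) :
    Relation.ReflTransGen r i k ∨ Relation.ReflTransGen r k i := by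
  have h1 : Relation.ReflTransGen (Function.swap r) j i := Relation.reflTransGen_swap.2 hij
  have h2 : Relation.ReflTransGen (Function.swap r) j k := Relation.reflTransGen_swap.2 hkj
  rcases reach_det (r := Function.swap r) (fun a b c hab hac => hf hab hac) h1 h2 with h | h
  · exact Or.inr (Relation.reflTransGen_swap.1 h)
  · exact Or.inl (Relation.reflTransGen_swap.1 h)

theorem reach_le {i j : Fin n} (h : Relation.ReflTransGen (ArcA A) i j) : i ≤ j := by
  induction h with
  | refl => exact le_refl _
  | tail _ h2 ih => exact le_trans ih (le_of_lt (arcA_lt h2))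

theorem eqvGen_chain {i j : Fin n} (h : Relation.EqvGen (ArcA A) i j) :
    Relation.ReflTransGen (ArcA A) i j ∨ Relation.ReflTransGen (ArcA A) j i := by
  induction h with
  | rel a b hab => exact Or.inl (Relation.ReflTransGen.single hab)
  | refl a => exact Or.inl Relation.ReflTransGen.refl
  | symm a b _ ih => exact ih.symm
  | trans a b c _ _ ih1 ih2 =>
    rcases ih1 with h1 | h1 <;> rcases ih2 with h2 | h2
    · exact Or.inl (h1.trans h2)
    · exact reach_codet (r := ArcA A) (fun _ _ _ hx hy => arcA_pred_unique hx hy) h1 h2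
    · exact reach_det (r := ArcA A) (fun _ _ _ hx hy => arcA_succ_unique hx hy) h1 h2
    · exact Or.inr (h2.trans h1)

theorem sameBlock_iff_mem_part {Q : Finpartition (Finset.univ : Finset (Fin n))} {i j : Fin n} :
    SameBlock Q i j ↔ j ∈ Q.part i := by
  constructor
  · rintro ⟨B, hB, hi, hj⟩
    rwa [Q.part_eq_of_mem hB hi]
  · intro h
    exact ⟨Q.part i, (Q.part_mem.2 (mem_univ i)), Q.mem_part (mem_univ i), h⟩

theorem sameBlock_refl (Q : Finpartition (Finset.univ : Finset (Fin n))) (i : Fin n) :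
    SameBlock Q i i := by
  obtain ⟨B, hB, hi⟩ := Q.exists_mem (mem_univ i)
  exact ⟨B, hB, hi, hi⟩

theorem sameBlock_symm {Q : Finpartition (Finset.univ : Finset (Fin n))} {i j : Fin n}
    (h : SameBlock Q i j) : SameBlock Q j i := by
  obtain ⟨B, hB, hi, hj⟩ := h; exact ⟨B, hB, hj, hi⟩

theorem sameBlock_trans {Q : Finpartition (Finset.univ : Finset (Fin n))} {i j k : Fin n}
    (h : SameBlock Q i j) (h' : SameBlock Q j k) : SameBlock Q i k := by
  obtain ⟨B, hB, hi, hj⟩ := h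
  obtain ⟨C, hC, hj', hk⟩ := h'
  exact ⟨B, hB, hi, (Q.eq_of_mem_parts hC hB hj' hj) ▸ hk⟩

theorem isArc_succ_unique {Q : Finpartition (Finset.univ : Finset (Fin n))} {i j l : Fin n}
    (h : IsArc Q i j) (h' : IsArc Q i l) : j = l := by
  rcases lt_trichotomy j l with hc | hc | hc
  · exact absurd h.2.1 (h'.2.2 j h.1 hc)
  · exact hc
  · exact absurd h'.2.1 (h.2.2 l h'.1 hc)

theorem isArc_pred_unique {Q : Finpartition (Finset.univ : Finset (Fin n))} {i j k : Fin n}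
    (h : IsArc Q i j) (h' : IsArc Q k j) : i = k := by
  rcases lt_trichotomy i k with hc | hc | hc
  · exact absurd (sameBlock_trans h.2.1 (sameBlock_symm h'.2.1)) (h.2.2 k hc h'.1)
  · exact hc
  · exact absurd (sameBlock_trans h'.2.1 (sameBlock_symm h.2.1)) (h'.2.2 i hc h.1)

/-- In any partition, elements of the same block are connected by a chain of arcs. -/
theorem sameBlock_to_eqvGen_aux (Q : Finpartition (Finset.univ : Finset (Fin n))) :
    ∀ d (i j : Fin n), j.val - i.val ≤ d → i ≤ j → SameBlock Q i j →
      Relation.EqvGen (IsArc Q) i j := by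
  intro d
  induction d with
  | zero =>
    intro i j hd hij _
    have : i = j := le_antisymm hij (by omega)
    exact this ▸ Relation.EqvGen.refl i
  | succ d ih =>
    intro i j hd hij hsb
    rcases eq_or_lt_of_le hij with rfl | hlt
    · exact Relation.EqvGen.refl i
    · set S : Finset (Fin n) := Finset.univ.filter (fun m => i < m ∧ SameBlock Q i m) with hS
      have hjS : j ∈ S := by simp [hS, hlt, hsb]
      have hSne : S.Nonempty := ⟨j, hjS⟩
      set m := S.min' hSne with hm
      have hmS : m ∈ S := S.min'_mem hSne
      simp only [hS, mem_filter] at hmS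
      have harc : IsArc Q i m := by
        refine ⟨hmS.2.1, hmS.2.2, fun k hik hkm hsk => ?_⟩
        have hkS : k ∈ S := by simp [hS, hik, hsk]
        exact absurd (S.min'_le k hkS) (not_le.2 hkm)
      have hmj : m ≤ j := S.min'_le j hjS
      rcases eq_or_lt_of_le hmj with rfl | hmlt
      · exact Relation.EqvGen.rel _ _ harc
      · refine Relation.EqvGen.trans _ _ _ (Relation.EqvGen.rel _ _ harc)
          (ih m j ?_ (le_of_lt hmlt) (sameBlock_trans (sameBlock_symm hmS.2.2) hsb))
        have h1 : i.val < m.val := hmS.2.1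
        omega

theorem sameBlock_iff_eqvGen {Q : Finpartition (Finset.univ : Finset (Fin n))} {i j : Fin n} :
    SameBlock Q i j ↔ Relation.EqvGen (IsArc Q) i j := by
  constructor
  · intro h
    rcases le_total i j with hij | hji
    · exact sameBlock_to_eqvGen_aux Q _ i j le_rfl hij h
    · exact Relation.EqvGen.symm _ _
        (sameBlock_to_eqvGen_aux Q _ j i le_rfl hji (sameBlock_symm h))
  · intro h
    induction h with
    | rel a b hab => exact hab.2.1
    | refl a => exact sameBlock_refl Q a
    | symm a b _ ih => exact sameBlock_symm ih
    | trans a b c _ _ ih1 ih2 => exact sameBlock_trans ih1 ih2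

/-- The partition associated to a matrix. -/
noncomputable def partA (A : Matrix (Fin n) (Fin n) K) :
    Finpartition (Finset.univ : Finset (Fin n)) :=
  Finpartition.ofSetoid (Relation.EqvGen.setoid (ArcA A))

theorem sameBlock_partA_iff {i j : Fin n} :
    SameBlock (partA A) i j ↔ Relation.EqvGen (ArcA A) i j := by
  rw [sameBlock_iff_mem_part, partA, Finpartition.mem_part_ofSetoid_iff_rel]
  rfl

theorem isArc_partA_iff {i j : Fin n} : IsArc (partA A) i j ↔ ArcA A i j := by
  constructor
  · rintro ⟨hij, hsb, hmin⟩
    rcases eqvGen_chain (sameBlock_partA_iff.1 hsb) with hr | hr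
    · rcases Relation.ReflTransGen.cases_head hr with rfl | ⟨m, hm, hmr⟩
      · exact absurd hij (lt_irrefl i)
      · have hmj : m ≤ j := reach_le hmr
        rcases eq_or_lt_of_le hmj with rfl | hmlt
        · exact hm
        · exact absurd (sameBlock_partA_iff.2 (Relation.EqvGen.rel _ _ hm))
            (hmin m (arcA_lt hm) hmlt)
    · exact absurd (reach_le hr) (not_le.2 hij)
  · intro h
    refine ⟨arcA_lt h, sameBlock_partA_iff.2 (Relation.EqvGen.rel _ _ h), fun k hik hkj hsk => ?_⟩
    rcases eqvGen_chain (sameBlock_partA_iff.1 hsk) with hr | hr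
    · rcases Relation.ReflTransGen.cases_head hr with rfl | ⟨m, hm, hmr⟩
      · exact absurd hik (lt_irrefl i)
      · cases arcA_succ_unique hm h
        exact absurd (reach_le hmr) (not_le.2 hkj)
    · exact absurd (reach_le hr) (not_le.2 hik)


theorem mem_jset_iff {P : Finpartition (Finset.univ : Finset (Fin n))} :
    A ∈ Jset K P ↔ (∀ i, A i i = 1) ∧ (∀ i j, j < i → A i j = 0) ∧
      (∀ p ∈ arcs P, A p.1 p.2 ≠ 0) ∧
      (∀ i j, RegularPair P i j → ¬ IsArc P i j → A i j = 0) := by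
  unfold Jset
  rw [Finset.mem_filter]
  simp only [Finset.mem_univ, true_and]

theorem mem_arcs_iff {P : Finpartition (Finset.univ : Finset (Fin n))} {p : Fin n × Fin n} :
    p ∈ arcs P ↔ IsArc P p.1 p.2 := by
  unfold arcs
  rw [Finset.mem_filter]
  simp only [Finset.mem_univ, true_and]

theorem jset_isArc_iff {Q : Finpartition (Finset.univ : Finset (Fin n))} (hA : A ∈ Jset K Q) :
    ∀ (i j : Fin n), IsArc Q i j ↔ ArcA A i j := by
  obtain ⟨-, -, h3, h4⟩ := mem_jset_iff.1 hA
  have key : ∀ m (i j : Fin n), i.val + (n - j.val) ≤ m → (IsArc Q i j ↔ ArcA A i j) := by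
    intro m
    induction m using Nat.strong_induction_on with
    | _ m ih =>
      intro i j hm
      constructor
      · intro h
        rw [arcA_iff]
        refine ⟨h3 (i, j) (mem_arcs_iff.2 h), h.1, fun k hk hka => ?_, fun l hl hla => ?_⟩
        · have hk' : k.val < i.val := hk
          have hmk : k.val + (n - j.val) < m := by omega
          have hQk : IsArc Q k j := (ih _ hmk k j le_rfl).2 hka
          have := isArc_pred_unique h hQk
          rw [this] at hk
          exact lt_irrefl k hk
        · have hl' : j.val < l.val := hl
          have hln : l.val < n := l.isLt
          have hml : i.val + (n - l.val) < m := by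
            have hij : i.val < j.val := h.1
            omega
          have hQl : IsArc Q i l := (ih _ hml i l le_rfl).2 hla
          have := isArc_succ_unique h hQl
          rw [this] at hl
          exact lt_irrefl l hl
      · intro h
        rcases (arcA_iff A i j).1 h with ⟨hne, hij, hleft, hright⟩
        by_contra hna
        have hreg : RegularPair Q i j := by
          refine ⟨hij, ?_⟩
          rintro (⟨k, hk, hka⟩ | ⟨l, hl, hla⟩)
          · have hk' : k.val < i.val := hk
            have hmk : k.val + (n - j.val) < m := by omega
            exact hleft k hk ((ih _ hmk k j le_rfl).1 hka)
          · have hl' : j.val < l.val := hl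
            have hln : l.val < n := l.isLt
            have hij' : i.val < j.val := hij
            have hml : i.val + (n - l.val) < m := by omega
            exact hright l hl ((ih _ hml i l le_rfl).1 hla)
        exact hne (h4 i j hreg hna)
  exact fun i j => key _ i j le_rfl

theorem finpartition_eq_of_sameBlock {Q P : Finpartition (Finset.univ : Finset (Fin n))}
    (h : ∀ i j, SameBlock Q i j ↔ SameBlock P i j) : Q = P := by
  have hsub : ∀ (Q P : Finpartition (Finset.univ : Finset (Fin n))),
      (∀ i j, SameBlock Q i j ↔ SameBlock P i j) → Q.parts ⊆ P.parts := by
    intro Q P h B hB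
    obtain ⟨x, hx⟩ := Q.nonempty_of_mem_parts hB
    have hBeq : B = P.part x := by
      ext y
      constructor
      · intro hy
        exact sameBlock_iff_mem_part.1 ((h x y).1 ⟨B, hB, hx, hy⟩)
      · intro hy
        obtain ⟨C, hC, hx', hy'⟩ := (h x y).2 (sameBlock_iff_mem_part.2 hy)
        rwa [Q.eq_of_mem_parts hC hB hx' hx] at hy'
    rw [hBeq]
    exact P.part_mem.2 (mem_univ x)
  exact Finpartition.ext (subset_antisymm (hsub Q P h) (hsub P Q fun i j => (h i j).symm))

end StmtAux

/-- the sets `J_π` partition `U_n(K)`: every upper unitriangular matrix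
belongs to exactly one `J_π`. -/
theorem stmt13 (n : ℕ) (K : Type*) [Field K] [Fintype K] [DecidableEq K]
    (A : Matrix (Fin n) (Fin n) K)
    (hdiag : ∀ i : Fin n, A i i = 1) (hlow : ∀ i j : Fin n, j < i → A i j = 0) :
    ∃! P : Finpartition (Finset.univ : Finset (Fin n)), A ∈ Jset K P := by
  refine ⟨partA A, ?_, ?_⟩
  · show A ∈ Jset K (partA A)
    rw [mem_jset_iff]
    refine ⟨hdiag, hlow, ?_, ?_⟩
    · intro p hp
      exact ((arcA_iff A p.1 p.2).1 (isArc_partA_iff.1 (mem_arcs_iff.1 hp))).1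
    · intro i j hreg hna
      by_contra hne
      have hnarc : ¬ ArcA A i j := fun h => hna (isArc_partA_iff.2 h)
      by_cases hc1 : ∀ k, k < i → ¬ ArcA A k j
      · by_cases hc2 : ∀ l, j < l → ¬ ArcA A i l
        · exact hnarc ((arcA_iff A i j).2 ⟨hne, hreg.1, hc1, hc2⟩)
        · push_neg at hc2
          obtain ⟨l, hl, hla⟩ := hc2
          exact hreg.2 (Or.inr ⟨l, hl, isArc_partA_iff.2 hla⟩)
      · push_neg at hc1
        obtain ⟨k, hk, hka⟩ := hc1
        exact hreg.2 (Or.inl ⟨k, hk, isArc_partA_iff.2 hka⟩)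
  · intro Q hQ
    apply finpartition_eq_of_sameBlock
    intro i j
    rw [sameBlock_iff_eqvGen, sameBlock_iff_eqvGen]
    have harc : ∀ a b, IsArc Q a b ↔ IsArc (partA A) a b := fun a b =>
      (jset_isArc_iff hQ a b).trans isArc_partA_iff.symm
    exact ⟨fun h => Relation.EqvGen.mono (fun a b => (harc a b).1) _ _ h,
      fun h => Relation.EqvGen.mono (fun a b => (harc a b).2) _ _ h⟩
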